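/- Let X be a real vector space with a quasi-norm ‖·‖ with modulus of concavity α ≥ 1, complete with respect to ‖·‖, equipped with a semi-normalized Markushevich basis (e_i, e*_i) with c := sup_i (1+‖e_i‖)(1+‖e*_i‖) < ∞. Let t ∈ (0,1] and n = (n_k) a strictly increasing sequence of positive integers. Suppose there is C₁ > 0 such that ‖P_A(x)‖ ≤ C₁·‖x‖ for every x ∈ X and every t-greedy set A for x with |A| ∈ {n_k : k ∈ ℕ}. Then for every x ∈ X and every sequence (A_k)_{k∈ℕ} where each A_k is a t-greedy set for x of cardinality n_k, one has ‖x − P_{A_k}(x)‖ → 0 as k → ∞. -/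

import Mathlib

open Finset

/-- Coordinate projection `P_A x = ∑_{i ∈ A} e*_i(x) • e_i`. -/
def qproj {X : Type*} [AddCommGroup X] [Module ℝ X]
    (e : ℕ → X) (f : ℕ → X →ₗ[ℝ] ℝ) (A : Finset ℕ) (x : X) : X :=
  ∑ i ∈ A, f i x • e i

/-- `A` is a `t`-greedy set for `x`:
`min_{i ∈ A} |e*_i(x)| ≥ t · sup_{j ∉ A} |e*_j(x)|`. -/
def qGreedySet {X : Type*} [AddCommGroup X] [Module ℝ X]
    (f : ℕ → X →ₗ[ℝ] ℝ) (t : ℝ) (x : X) (A : Finset ℕ) : Prop :=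
  ∀ i ∈ A, ∀ j ∉ A, t * |f j x| ≤ |f i x|

set_option maxHeartbeats 1000000 in
/-- If the `t`-greedy projections of cardinality in `n` are uniformly bounded,
then every sequence of `t`-greedy sums of orders `n_k` of any `x` converges
to `x`. -/
theorem stmt_12 {X : Type*} [AddCommGroup X] [Module ℝ X]
    (q : X → ℝ) (α : ℝ) (hα : 1 ≤ α)
    (hq0 : ∀ x : X, 0 ≤ q x) (hqz : ∀ x : X, q x = 0 ↔ x = 0)
    (hqs : ∀ (a : ℝ) (x : X), q (a • x) = |a| * q x)
    (hqa : ∀ x y : X, q (x + y) ≤ α * (q x + q y))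
    (hcomplete : ∀ u : ℕ → X,
      (∀ ε : ℝ, 0 < ε → ∃ N, ∀ p ≥ N, ∀ r ≥ N, q (u p - u r) ≤ ε) →
      ∃ x : X, ∀ ε : ℝ, 0 < ε → ∃ N, ∀ p ≥ N, q (u p - x) ≤ ε)
    (e : ℕ → X) (f : ℕ → X →ₗ[ℝ] ℝ) (fn : ℕ → ℝ)
    (hfn0 : ∀ i, 0 ≤ fn i) (hfb : ∀ (i : ℕ) (x : X), |f i x| ≤ fn i * q x)
    (hbio : ∀ k i, f k (e i) = if k = i then 1 else 0)
    (c : ℝ) (hc : ∀ i, (1 + q (e i)) * (1 + fn i) ≤ c)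
    (hdense : ∀ x : X, ∀ ε : ℝ, 0 < ε →
      ∃ y ∈ Submodule.span ℝ (Set.range e), q (x - y) ≤ ε)
    (t : ℝ) (ht0 : 0 < t) (ht1 : t ≤ 1)
    (n : ℕ → ℕ) (hn : StrictMono n) (hnpos : ∀ k, 0 < n k)
    (C₁ : ℝ) (hC₁ : 0 < C₁)
    (hqg : ∀ (x : X) (A : Finset ℕ), qGreedySet f t x A → (∃ k, A.card = n k) →
      q (qproj e f A x) ≤ C₁ * q x) :
    ∀ (x : X) (A : ℕ → Finset ℕ),
      (∀ k, qGreedySet f t x (A k) ∧ (A k).card = n k) →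
      ∀ ε : ℝ, 0 < ε → ∃ K, ∀ k ≥ K, q (x - qproj e f (A k) x) ≤ ε := by
  -- ### basic constants
  have hαpos : (0:ℝ) < α := lt_of_lt_of_le one_pos hα
  have hc1 : (1:ℝ) ≤ c := by nlinarith [hc 0, hq0 (e 0), hfn0 0]
  have hcpos : (0:ℝ) < c := lt_of_lt_of_le one_pos hc1
  have hqe : ∀ i, q (e i) ≤ c := by
    intro i; nlinarith [hc i, hq0 (e i), hfn0 i]
  have hfnle : ∀ i, fn i ≤ c := by
    intro i; nlinarith [hc i, hq0 (e i), hfn0 i]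
  have hqzero : q (0:X) = 0 := (hqz 0).mpr rfl
  have hqneg : ∀ u : X, q (-u) = q u := by
    intro u
    have h := hqs (-1) u
    simpa using h
  have hqsub : ∀ u v : X, q (u - v) ≤ α * (q u + q v) := by
    intro u v
    rw [sub_eq_add_neg]
    calc q (u + -v) ≤ α * (q u + q (-v)) := hqa u (-v)
      _ = α * (q u + q v) := by rw [hqneg]
  have honele : ∀ N : ℕ, (1:ℝ) ≤ α ^ N := fun N => one_le_pow₀ hα
  -- ### coordinates of projections
  have hfproj : ∀ (D : Finset ℕ) (y : X) (i : ℕ),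
      f i (qproj e f D y) = if i ∈ D then f i y else 0 := by
    intro D y i
    unfold qproj
    rw [map_sum]
    have hterm : ∀ j ∈ D, f i (f j y • e j) = if i = j then f j y else 0 := by
      intro j _
      rw [map_smul, smul_eq_mul, hbio i j]
      by_cases h : i = j
      · subst h; simp
      · simp [h]
    rw [Finset.sum_congr rfl hterm]
    exact Finset.sum_ite_eq D i (fun j => f j y)
  have hprojunion : ∀ (D₁ D₂ : Finset ℕ) (y : X), Disjoint D₁ D₂ →
      qproj e f (D₁ ∪ D₂) y = qproj e f D₁ y + qproj e f D₂ y := by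
    intro D₁ D₂ y h
    unfold qproj
    exact Finset.sum_union h
  -- ### crude bound on sums
  have hqsum : ∀ (D : Finset ℕ) (g : ℕ → X),
      q (∑ i ∈ D, g i) ≤ α ^ D.card * ∑ i ∈ D, q (g i) := by
    intro D
    induction D using Finset.induction_on with
    | empty => intro g; simp [hqzero]
    | @insert a s ha ih =>
      intro g
      rw [Finset.sum_insert ha, Finset.card_insert_of_notMem ha, Finset.sum_insert ha]
      have h2 : 0 ≤ ∑ i ∈ s, q (g i) := Finset.sum_nonneg fun i _ => hq0 _
      have h1 : (1:ℝ) ≤ α ^ s.card := honele s.card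
      calc q (g a + ∑ i ∈ s, g i) ≤ α * (q (g a) + q (∑ i ∈ s, g i)) := hqa _ _
        _ ≤ α * (q (g a) + α ^ s.card * ∑ i ∈ s, q (g i)) := by
            apply mul_le_mul_of_nonneg_left _ hαpos.le
            exact add_le_add_right (ih g) _
        _ ≤ α ^ (s.card + 1) * (q (g a) + ∑ i ∈ s, q (g i)) := by
            rw [pow_succ]
            nlinarith [hq0 (g a), mul_nonneg (mul_nonneg hαpos.le (hq0 (g a)))
              (sub_nonneg.mpr h1)]
  have hsmallproj : ∀ (D : Finset ℕ) (y : X) (σ : ℝ), 0 ≤ σ →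
      (∀ i ∈ D, |f i y| ≤ σ) →
      q (qproj e f D y) ≤ α ^ D.card * ((D.card : ℝ) * (σ * c)) := by
    intro D y σ hσ hcoef
    unfold qproj
    calc q (∑ i ∈ D, f i y • e i) ≤ α ^ D.card * ∑ i ∈ D, q (f i y • e i) := hqsum D _
      _ ≤ α ^ D.card * ((D.card : ℝ) * (σ * c)) := by
          apply mul_le_mul_of_nonneg_left _ (pow_nonneg hαpos.le _)
          calc ∑ i ∈ D, q (f i y • e i) = ∑ i ∈ D, |f i y| * q (e i) :=
                Finset.sum_congr rfl fun i _ => hqs _ _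
            _ ≤ ∑ _i ∈ D, σ * c := by
                apply Finset.sum_le_sum
                intro i hi
                exact mul_le_mul (hcoef i hi) (hqe i) (hq0 _) hσ
            _ = (D.card : ℝ) * (σ * c) := by
                rw [Finset.sum_const, nsmul_eq_mul]
  have hmono : ∀ (d N : ℕ) (σ : ℝ), 0 ≤ σ → d ≤ N →
      α ^ d * ((d : ℝ) * (σ * c)) ≤ α ^ N * ((N : ℝ) * (σ * c)) := by
    intro d N σ hσ hdN
    have h1 : α ^ d ≤ α ^ N := pow_le_pow_right₀ hα hdN
    have h2 : ((d : ℝ)) ≤ (N : ℝ) := Nat.cast_le.mpr hdN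
    have h3 : (0:ℝ) ≤ σ * c := mul_nonneg hσ hcpos.le
    have h4 : (0:ℝ) ≤ (d : ℝ) := Nat.cast_nonneg d
    have h5 : (0:ℝ) ≤ α ^ N := (pow_pos hαpos N).le
    exact mul_le_mul h1 (mul_le_mul_of_nonneg_right h2 h3) (mul_nonneg h4 h3) h5
  -- ### coordinates vanish at infinity
  have hsupp : ∀ (y : X) (σ : ℝ), 0 < σ → ∃ S : Finset ℕ, ∀ j ∉ S, |f j y| ≤ σ := by
    intro y σ hσ
    obtain ⟨z, hzmem, hzq⟩ := hdense y (σ / c) (div_pos hσ hcpos)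
    rw [Finsupp.mem_span_range_iff_exists_finsupp] at hzmem
    obtain ⟨μ, hμ⟩ := hzmem
    refine ⟨μ.support, fun j hj => ?_⟩
    have hfz : f j z = 0 := by
      rw [← hμ]
      have hz2 : (μ.sum fun i a => a • e i) = ∑ i ∈ μ.support, μ i • e i := rfl
      rw [hz2, map_sum]
      apply Finset.sum_eq_zero
      intro i hi
      have hne : j ≠ i := fun h => hj (h ▸ hi)
      rw [map_smul, smul_eq_mul, hbio j i, if_neg hne, mul_zero]
    have heq : f j y = f j (y - z) := by rw [map_sub, hfz, sub_zero]
    rw [heq]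
    calc |f j (y - z)| ≤ fn j * q (y - z) := hfb j _
      _ ≤ c * (σ / c) := mul_le_mul (hfnle j) hzq (hq0 _) hcpos.le
      _ = σ := by field_simp
  -- ### maximizers
  have hmax : ∀ (y : X) (F : Finset ℕ), ∃ j, j ∉ F ∧ ∀ j', j' ∉ F → |f j' y| ≤ |f j y| := by
    intro y F
    by_cases hall : ∀ j', j' ∉ F → f j' y = 0
    · obtain ⟨j, hj⟩ := Infinite.exists_notMem_finset F
      refine ⟨j, hj, fun j' hj' => ?_⟩
      rw [hall j' hj']
      simp
    · push_neg at hall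
      obtain ⟨j₀, hj₀F, hj₀⟩ := hall
      have hv₀ : 0 < |f j₀ y| := abs_pos.mpr hj₀
      obtain ⟨S, hS⟩ := hsupp y (|f j₀ y| / 2) (by positivity)
      have hj₀S : j₀ ∈ S := by
        by_contra h
        have := hS j₀ h
        linarith
      have hTne : (S \ F).Nonempty := ⟨j₀, Finset.mem_sdiff.mpr ⟨hj₀S, hj₀F⟩⟩
      obtain ⟨j, hjT, hjmax⟩ := Finset.exists_max_image (S \ F) (fun j' => |f j' y|) hTne
      obtain ⟨hjS, hjF⟩ := Finset.mem_sdiff.mp hjT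
      refine ⟨j, hjF, fun j' hj'F => ?_⟩
      by_cases hj'S : j' ∈ S
      · exact hjmax j' (Finset.mem_sdiff.mpr ⟨hj'S, hj'F⟩)
      · have h1 := hS j' hj'S
        have h2 := hjmax j₀ (Finset.mem_sdiff.mpr ⟨hj₀S, hj₀F⟩)
        linarith
  -- ### top fill
  have htop : ∀ (y : X) (F : Finset ℕ) (d : ℕ), ∃ E : Finset ℕ,
      Disjoint E F ∧ E.card = d ∧
      ∀ i ∈ E, ∀ j, j ∉ E → j ∉ F → |f j y| ≤ |f i y| := by
    intro y F d
    induction d with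
    | zero => exact ⟨∅, by simp, by simp, by simp⟩
    | succ d ih =>
      obtain ⟨E, hdisj, hcard, hprop⟩ := ih
      obtain ⟨js, hjs, hjsmax⟩ := hmax y (F ∪ E)
      have hjsF : js ∉ F := fun h => hjs (Finset.mem_union_left _ h)
      have hjsE : js ∉ E := fun h => hjs (Finset.mem_union_right _ h)
      refine ⟨insert js E, ?_, ?_, ?_⟩
      · rw [Finset.disjoint_left]
        intro a ha haF
        rcases Finset.mem_insert.mp ha with rfl | haE
        · exact hjsF haF
        · exact Finset.disjoint_left.mp hdisj haE haF
      · rw [Finset.card_insert_of_notMem hjsE, hcard]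
      · intro i hi j hjE' hjF
        have hjE : j ∉ E := fun h => hjE' (Finset.mem_insert_of_mem h)
        rcases Finset.mem_insert.mp hi with rfl | hiE
        · exact hjsmax j (fun hmem => (Finset.mem_union.mp hmem).elim hjF hjE)
        · exact hprop i hiE j hjE hjF
  -- ### k ≤ n k
  have hnk : ∀ k, k ≤ n k := by
    intro k
    induction k with
    | zero => exact Nat.zero_le _
    | succ k ih => exact Nat.succ_le_of_lt (lt_of_le_of_lt ih (hn (Nat.lt_succ_self k)))
  -- ### CORE : strong M-basis property
  have hcore : ∀ (y : X) (ε : ℝ), 0 < ε → ∃ B : Finset ℕ, q (y - qproj e f B y) ≤ ε := by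
    intro y ε hε
    have h2α : (0:ℝ) < 2 * α ^ 2 * (1 + C₁) := by positivity
    set δ := ε / (2 * α ^ 2 * (1 + C₁)) with hδdef
    have hδ : 0 < δ := div_pos hε h2α
    obtain ⟨z, hzmem, hzq⟩ := hdense y δ hδ
    rw [Finsupp.mem_span_range_iff_exists_finsupp] at hzmem
    obtain ⟨μ, hμ⟩ := hzmem
    set B₀ := μ.support with hB₀
    set w := y - z with hw
    set Y := α ^ B₀.card * ((B₀.card : ℝ) * c) with hYdef
    have hY : 0 ≤ Y := by rw [hYdef]; positivity
    have hYp : (0:ℝ) < 2 * α * (Y + 1) :=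
      mul_pos (mul_pos two_pos hαpos) (by linarith)
    set σc := ε / (2 * α * (Y + 1)) with hσcdef
    have hσc : 0 < σc := by rw [hσcdef]; exact div_pos hε hYp
    clear_value δ B₀ w Y σc
    obtain ⟨S, hS⟩ := hsupp w σc hσc
    obtain ⟨G, _, hGcard, hGprop⟩ := htop w ∅ (n S.card)
    have hGout : ∀ j, j ∉ G → |f j w| ≤ σc := by
      intro j hj
      by_contra h
      push_neg at h
      have hGsub : insert j G ⊆ S := by
        intro a ha
        rcases Finset.mem_insert.mp ha with rfl | haG
        · by_contra haS
          exact absurd (hS a haS) (not_le.mpr h)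
        · have h1 := hGprop a haG j hj (Finset.notMem_empty j)
          by_contra haS
          have := hS a haS
          linarith
      have hcards := Finset.card_le_card hGsub
      rw [Finset.card_insert_of_notMem hj, hGcard] at hcards
      have := hnk S.card
      omega
    have hGgreedy : qGreedySet f t w G := by
      intro i hi j hj
      have h1 := hGprop i hi j hj (Finset.notMem_empty j)
      calc t * |f j w| ≤ |f j w| := mul_le_of_le_one_left (abs_nonneg _) ht1
        _ ≤ |f i w| := h1
    have hGq := hqg w G hGgreedy ⟨S.card, hGcard⟩
    refine ⟨B₀ ∪ G, ?_⟩
    -- identity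
    have hfz : ∀ i, f i z = if i ∈ B₀ then μ i else 0 := by
      intro i
      rw [hB₀, ← hμ]
      have hz2 : (μ.sum fun j a => a • e j) = ∑ j ∈ μ.support, μ j • e j := rfl
      rw [hz2, map_sum]
      have hterm : ∀ j ∈ μ.support, f i (μ j • e j) = if i = j then μ j else 0 := by
        intro j _
        rw [map_smul, smul_eq_mul, hbio i j]
        by_cases h : i = j
        · subst h; simp
        · simp [h]
      rw [Finset.sum_congr rfl hterm]
      exact Finset.sum_ite_eq μ.support i (fun j => μ j)
    have hzeq : qproj e f (B₀ ∪ G) z = z := by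
      unfold qproj
      calc ∑ i ∈ B₀ ∪ G, f i z • e i
          = ∑ i ∈ B₀ ∪ G, (if i ∈ B₀ then μ i • e i else 0) := by
            apply Finset.sum_congr rfl
            intro i _
            rw [hfz i]
            by_cases h : i ∈ B₀ <;> simp [h]
        _ = ∑ i ∈ (B₀ ∪ G) ∩ B₀, μ i • e i := Finset.sum_ite_mem _ _ _
        _ = ∑ i ∈ B₀, μ i • e i := by
            rw [Finset.inter_eq_right.mpr Finset.subset_union_left]
        _ = z := by rw [hB₀, ← hμ]; rfl
    have hproj_add : qproj e f (B₀ ∪ G) y = qproj e f (B₀ ∪ G) z + qproj e f (B₀ ∪ G) w := by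
      unfold qproj
      rw [← Finset.sum_add_distrib]
      apply Finset.sum_congr rfl
      intro i _
      have : f i w = f i y - f i z := by rw [hw, map_sub]
      rw [this, ← add_smul]
      ring_nf
    have hsplit : qproj e f (B₀ ∪ G) w = qproj e f G w + qproj e f (B₀ \ G) w := by
      have hu : B₀ ∪ G = G ∪ (B₀ \ G) := by
        rw [Finset.union_sdiff_self_eq_union, Finset.union_comm]
      rw [hu, hprojunion G (B₀ \ G) w Finset.disjoint_sdiff]
    have hiden : y - qproj e f (B₀ ∪ G) y = (w - qproj e f G w) - qproj e f (B₀ \ G) w := by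
      rw [hproj_add, hzeq, hsplit, hw]
      abel
    rw [hiden]
    have h1 : q (w - qproj e f G w) ≤ α * (1 + C₁) * δ := by
      calc q (w - qproj e f G w) ≤ α * (q w + q (qproj e f G w)) := hqsub _ _
        _ ≤ α * (δ + C₁ * δ) := by
            apply mul_le_mul_of_nonneg_left _ hαpos.le
            have h2 : q (qproj e f G w) ≤ C₁ * δ :=
              le_trans hGq (mul_le_mul_of_nonneg_left hzq hC₁.le)
            exact add_le_add hzq h2
        _ = α * (1 + C₁) * δ := by ring
    have h2 : q (qproj e f (B₀ \ G) w) ≤ Y * σc := by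
      have hcoef : ∀ i ∈ B₀ \ G, |f i w| ≤ σc := fun i hi =>
        hGout i (Finset.mem_sdiff.mp hi).2
      have hcle : (B₀ \ G).card ≤ B₀.card := Finset.card_le_card (Finset.sdiff_subset)
      calc q (qproj e f (B₀ \ G) w)
          ≤ α ^ (B₀ \ G).card * (((B₀ \ G).card : ℝ) * (σc * c)) :=
            hsmallproj _ w σc hσc.le hcoef
        _ ≤ α ^ B₀.card * ((B₀.card : ℝ) * (σc * c)) := hmono _ _ _ hσc.le hcle
        _ = Y * σc := by rw [hYdef]; ring
    calc q ((w - qproj e f G w) - qproj e f (B₀ \ G) w)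
        ≤ α * (q (w - qproj e f G w) + q (qproj e f (B₀ \ G) w)) := hqsub _ _
      _ ≤ α * (α * (1 + C₁) * δ + Y * σc) := by
          apply mul_le_mul_of_nonneg_left (add_le_add h1 h2) hαpos.le
      _ = α ^ 2 * (1 + C₁) * δ + α * Y * σc := by ring
      _ ≤ ε / 2 + ε / 2 := by
          have hkey1 : δ * (2 * α ^ 2 * (1 + C₁)) = ε := by
            rw [hδdef]; exact div_mul_cancel₀ ε (ne_of_gt h2α)
          have hkey2 : σc * (2 * α * (Y + 1)) = ε := by
            rw [hσcdef]; exact div_mul_cancel₀ ε (ne_of_gt hYp)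
          have e1 : α ^ 2 * (1 + C₁) * δ = ε / 2 := by linear_combination hkey1 / 2
          have e2 : α * Y * σc ≤ ε / 2 := by
            have e3 : α * (Y + 1) * σc = ε / 2 := by linear_combination hkey2 / 2
            calc α * Y * σc = α * (Y + 1) * σc - α * σc := by ring
              _ ≤ α * (Y + 1) * σc := sub_le_self _ (mul_nonneg hαpos.le hσc.le)
              _ = ε / 2 := e3
          linarith
      _ = ε := by ring
  -- ### MAIN
  intro x A hA ε hε
  have h2α : (0:ℝ) < 2 * α ^ 2 * (1 + C₁) := by positivity
  set δ := ε / (2 * α ^ 2 * (1 + C₁)) with hδdef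
  have hδ : 0 < δ := div_pos hε h2α
  obtain ⟨B, hB⟩ := hcore x δ hδ
  set v := x - qproj e f B x with hv
  set N := B.card with hN
  set Y := α ^ N * ((N : ℝ) * c) with hYdef
  have hY : 0 ≤ Y := by rw [hYdef]; positivity
  have hYp : (0:ℝ) < 4 * α ^ 2 * (Y + 1) :=
    mul_pos (by positivity) (by linarith)
  set σ := ε / (4 * α ^ 2 * (Y + 1)) with hσdef
  have hσ : 0 < σ := by rw [hσdef]; exact div_pos hε hYp
  clear_value δ v N Y σ
  obtain ⟨S, hS⟩ := hsupp x (t * σ) (mul_pos ht0 hσ)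
  refine ⟨S.card + 1, fun k hk => ?_⟩
  obtain ⟨hAg, hAcard⟩ := hA k
  -- coordinates outside A k are small
  have hout : ∀ j, j ∉ A k → |f j x| ≤ σ := by
    have hcard : S.card < (A k).card := by
      rw [hAcard]
      calc S.card < S.card + 1 := Nat.lt_succ_self _
        _ ≤ k := hk
        _ ≤ n k := hnk k
    have hnsub : ¬ (A k ⊆ S) := fun h => absurd (Finset.card_le_card h) (not_le.mpr hcard)
    obtain ⟨i₀, hi₀A, hi₀S⟩ := Finset.not_subset.mp hnsub
    intro j hj
    have h1 := hAg i₀ hi₀A j hj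
    have h2 := hS i₀ hi₀S
    have h3 : t * |f j x| ≤ t * σ := le_trans h1 h2
    exact le_of_mul_le_mul_left h3 ht0
  -- coordinates of v
  have hfv : ∀ i, f i v = if i ∈ B then 0 else f i x := by
    intro i
    rw [hv, map_sub, hfproj B x i]
    by_cases h : i ∈ B <;> simp [h]
  -- top fill
  obtain ⟨E, hEdisj, hEcard, hEprop⟩ := htop v (A k \ B) ((A k ∩ B).card)
  set G := (A k \ B) ∪ E with hG
  have hsplitAk : (A k \ B) ∪ (A k ∩ B) = A k := by
    ext a
    simp only [Finset.mem_union, Finset.mem_sdiff, Finset.mem_inter]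
    tauto
  have hdisj2 : Disjoint (A k \ B) (A k ∩ B) := by
    rw [Finset.disjoint_left]
    intro a ha hb
    exact (Finset.mem_sdiff.mp ha).2 (Finset.mem_inter.mp hb).2
  have hGcard : G.card = n k := by
    rw [hG, Finset.card_union_of_disjoint hEdisj.symm, hEcard, ← hAcard,
      ← Finset.card_union_of_disjoint hdisj2, hsplitAk]
  -- E has small coordinates
  have hEcoef : ∀ i ∈ E, |f i v| ≤ σ := by
    intro i hi
    have hiF : i ∉ A k \ B := Finset.disjoint_left.mp hEdisj hi
    rw [hfv i]
    by_cases h : i ∈ B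
    · simp [h, hσ.le]
    · rw [if_neg h]
      have : i ∉ A k := fun hmem => hiF (Finset.mem_sdiff.mpr ⟨hmem, h⟩)
      exact hout i this
  -- G is t-greedy for v
  have hGgreedy : qGreedySet f t v G := by
    intro i hi j hj
    have hjF : j ∉ A k \ B := fun h => hj (hG ▸ Finset.mem_union_left _ h)
    have hjE : j ∉ E := fun h => hj (hG ▸ Finset.mem_union_right _ h)
    by_cases hjB : j ∈ B
    · rw [hfv j, if_pos hjB]
      simpa using abs_nonneg (f i v)
    · have hjA : j ∉ A k := fun h => hjF (Finset.mem_sdiff.mpr ⟨h, hjB⟩)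
      rcases Finset.mem_union.mp (hG ▸ hi) with hiF | hiE
      · obtain ⟨hiA, hiB⟩ := Finset.mem_sdiff.mp hiF
        rw [hfv i, hfv j, if_neg hiB, if_neg hjB]
        exact hAg i hiA j hjA
      · have h1 := hEprop i hiE j hjE hjF
        calc t * |f j v| ≤ |f j v| := mul_le_of_le_one_left (abs_nonneg _) ht1
          _ ≤ |f i v| := h1
  have hGq := hqg v G hGgreedy ⟨k, hGcard⟩
  -- identity
  have hFv : qproj e f (A k \ B) v = qproj e f (A k \ B) x := by
    unfold qproj
    apply Finset.sum_congr rfl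
    intro i hi
    rw [hfv i, if_neg (Finset.mem_sdiff.mp hi).2]
  have hGsplit : qproj e f G v = qproj e f (A k \ B) v + qproj e f E v := by
    rw [hG]
    exact hprojunion _ _ _ hEdisj.symm
  have h1 : qproj e f B x + qproj e f (A k \ B) x
      = qproj e f (A k) x + qproj e f (B \ A k) x := by
    rw [← hprojunion B (A k \ B) x Finset.disjoint_sdiff,
      ← hprojunion (A k) (B \ A k) x Finset.disjoint_sdiff,
      Finset.union_sdiff_self_eq_union, Finset.union_sdiff_self_eq_union,
      Finset.union_comm]
  have hiden : x - qproj e f (A k) x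
      = (v - qproj e f G v) + (qproj e f E v + qproj e f (B \ A k) x) := by
    rw [hGsplit, hFv, hv]
    have h2 : qproj e f (A k) x
        = qproj e f B x + qproj e f (A k \ B) x - qproj e f (B \ A k) x := by
      rw [h1]; abel
    rw [h2]
    abel
  rw [hiden]
  -- bounds
  have hqv : q v ≤ δ := hB
  have hb1 : q (v - qproj e f G v) ≤ α * (1 + C₁) * δ := by
    calc q (v - qproj e f G v) ≤ α * (q v + q (qproj e f G v)) := hqsub _ _
      _ ≤ α * (δ + C₁ * δ) := by
          apply mul_le_mul_of_nonneg_left _ hαpos.le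
          have h2 : q (qproj e f G v) ≤ C₁ * δ :=
            le_trans hGq (mul_le_mul_of_nonneg_left hqv hC₁.le)
          exact add_le_add hqv h2
      _ = α * (1 + C₁) * δ := by ring
  have hb2 : q (qproj e f E v) ≤ Y * σ := by
    have hcle : E.card ≤ N := by
      rw [hEcard, hN]
      exact Finset.card_le_card Finset.inter_subset_right
    calc q (qproj e f E v)
        ≤ α ^ E.card * ((E.card : ℝ) * (σ * c)) := hsmallproj _ v σ hσ.le hEcoef
      _ ≤ α ^ N * ((N : ℝ) * (σ * c)) := hmono _ _ _ hσ.le hcle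
      _ = Y * σ := by rw [hYdef]; ring
  have hb3 : q (qproj e f (B \ A k) x) ≤ Y * σ := by
    have hcoef : ∀ i ∈ B \ A k, |f i x| ≤ σ := fun i hi =>
      hout i (Finset.mem_sdiff.mp hi).2
    have hcle : (B \ A k).card ≤ N := by
      rw [hN]
      exact Finset.card_le_card Finset.sdiff_subset
    calc q (qproj e f (B \ A k) x)
        ≤ α ^ (B \ A k).card * (((B \ A k).card : ℝ) * (σ * c)) :=
          hsmallproj _ x σ hσ.le hcoef
      _ ≤ α ^ N * ((N : ℝ) * (σ * c)) := hmono _ _ _ hσ.le hcle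
      _ = Y * σ := by rw [hYdef]; ring
  calc q ((v - qproj e f G v) + (qproj e f E v + qproj e f (B \ A k) x))
      ≤ α * (q (v - qproj e f G v) + q (qproj e f E v + qproj e f (B \ A k) x)) := hqa _ _
    _ ≤ α * (α * (1 + C₁) * δ + α * (Y * σ + Y * σ)) := by
        apply mul_le_mul_of_nonneg_left _ hαpos.le
        apply add_le_add hb1
        calc q (qproj e f E v + qproj e f (B \ A k) x)
            ≤ α * (q (qproj e f E v) + q (qproj e f (B \ A k) x)) := hqa _ _
          _ ≤ α * (Y * σ + Y * σ) := by
              apply mul_le_mul_of_nonneg_left (add_le_add hb2 hb3) hαpos.le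
    _ = α ^ 2 * (1 + C₁) * δ + 2 * α ^ 2 * Y * σ := by ring
    _ ≤ ε / 2 + ε / 2 := by
        have hkey1 : δ * (2 * α ^ 2 * (1 + C₁)) = ε := by
          rw [hδdef]; exact div_mul_cancel₀ ε (ne_of_gt h2α)
        have hkey2 : σ * (4 * α ^ 2 * (Y + 1)) = ε := by
          rw [hσdef]; exact div_mul_cancel₀ ε (ne_of_gt hYp)
        have e1 : α ^ 2 * (1 + C₁) * δ = ε / 2 := by linear_combination hkey1 / 2
        have e2 : 2 * α ^ 2 * Y * σ ≤ ε / 2 := by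
          have e3 : 2 * α ^ 2 * (Y + 1) * σ = ε / 2 := by linear_combination hkey2 / 2
          have h0 : (0:ℝ) ≤ 2 * α ^ 2 * σ :=
            mul_nonneg (mul_nonneg (by norm_num) (sq_nonneg α)) hσ.le
          calc 2 * α ^ 2 * Y * σ = 2 * α ^ 2 * (Y + 1) * σ - 2 * α ^ 2 * σ := by ring
            _ ≤ 2 * α ^ 2 * (Y + 1) * σ := sub_le_self _ h0
            _ = ε / 2 := e3
        linarith
    _ = ε := by ring
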